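/- arXiv:1805.00658 — 4 statements merged into one kernel-verified Lean document; each statement's English description precedes it below -/
import Mathlib

section
/- Let {A^t}_{t≥0} be a sequence of column stochastic N×N matrices such that every nonzero entry of each A^t is at least θ ∈ (0,1), every diagonal entry of each A^t is positive, and the sequence of induced digraphs {G^t} (where G^t has an edge (j,i) iff (A^t)_{ij} > 0) is T-strongly connected for some integer T > 0. Let φ^0 ∈ ℝ^N have positive entries with Σ_{i=1}^N φ_i^0 = 1, and let x_i^0 ∈ ℝ^d for each i. Define recursively φ^{t+1} = A^t φ^t and x_i^{t+1} = (1/φ_i^{t+1}) Σ_{j=1}^N (A^t)_{ij} φ_j^t x_j^t (all entries φ_i^t are positive for all t, so these updates are well defined). Then for every i ∈ {1,...,N}, lim_{t→∞} ‖x_i^t − Σ_{k=1}^N φ_k^0 x_k^0‖ = 0. -/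
open Finset

namespace PushSumAux

variable {N : ℕ}

/-- Product of `k` matrices starting at time `s`: `A (s+k-1) * ⋯ * A s`. -/
def Pp (A : ℕ → Matrix (Fin N) (Fin N) ℝ) (s : ℕ) : ℕ → Matrix (Fin N) (Fin N) ℝ
  | 0 => 1
  | k+1 => A (s+k) * Pp A s k

variable {A : ℕ → Matrix (Fin N) (Fin N) ℝ}

lemma Pp_nonneg (hnn : ∀ t i j, 0 ≤ A t i j) (s k : ℕ) (i j : Fin N) :
    0 ≤ Pp A s k i j := by
  induction k generalizing i j with
  | zero => by_cases h : i = j <;> simp [Pp, Matrix.one_apply, h]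
  | succ k ih =>
    simp only [Pp, Matrix.mul_apply]
    exact Finset.sum_nonneg fun m _ => mul_nonneg (hnn _ _ _) (ih _ _)

lemma Pp_colsum (hcol : ∀ t j, ∑ i, A t i j = 1) (s k : ℕ) (j : Fin N) :
    ∑ i, Pp A s k i j = 1 := by
  induction k with
  | zero => simp [Pp, Matrix.one_apply]
  | succ k ih =>
    simp only [Pp, Matrix.mul_apply]
    rw [Finset.sum_comm]
    calc ∑ m, ∑ i, A (s+k) i m * Pp A s k m j
        = ∑ m, (∑ i, A (s+k) i m) * Pp A s k m j := by
          simp [Finset.sum_mul]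
      _ = 1 := by simp [hcol, ih]

lemma Pp_pos_mono (hnn : ∀ t i j, 0 ≤ A t i j) (hdiag : ∀ t i, 0 < A t i i)
    {s k : ℕ} {i j : Fin N} (h : 0 < Pp A s k i j) : 0 < Pp A s (k+1) i j := by
  simp only [Pp, Matrix.mul_apply]
  have hle : A (s+k) i i * Pp A s k i j ≤ ∑ m, A (s+k) i m * Pp A s k m j :=
    Finset.single_le_sum (f := fun m => A (s+k) i m * Pp A s k m j)
      (fun m _ => mul_nonneg (hnn _ _ _) (Pp_nonneg hnn _ _ _ _)) (Finset.mem_univ i)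
  exact lt_of_lt_of_le (mul_pos (hdiag _ _) h) hle

lemma Pp_pos_add (hnn : ∀ t i j, 0 ≤ A t i j) (hdiag : ∀ t i, 0 < A t i i)
    {s k : ℕ} {i j : Fin N} (h : 0 < Pp A s k i j) (m : ℕ) : 0 < Pp A s (k+m) i j := by
  induction m with
  | zero => exact h
  | succ m ih => exact Pp_pos_mono hnn hdiag ih

lemma Pp_diag_pos (hnn : ∀ t i j, 0 ≤ A t i j) (hdiag : ∀ t i, 0 < A t i i)
    (s k : ℕ) (i : Fin N) : 0 < Pp A s k i i := by
  have h0 : 0 < Pp A s 0 i i := by simp [Pp, Matrix.one_apply]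
  simpa using Pp_pos_add hnn hdiag h0 k

lemma Pp_hop (hnn : ∀ t i j, 0 ≤ A t i j)
    {s k : ℕ} {v j w : Fin N} (h : 0 < Pp A s k v j) (he : 0 < A (s+k) w v) :
    0 < Pp A s (k+1) w j := by
  simp only [Pp, Matrix.mul_apply]
  have hle : A (s+k) w v * Pp A s k v j ≤ ∑ m, A (s+k) w m * Pp A s k m j :=
    Finset.single_le_sum (f := fun m => A (s+k) w m * Pp A s k m j)
      (fun m _ => mul_nonneg (hnn _ _ _) (Pp_nonneg hnn _ _ _ _)) (Finset.mem_univ v)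
  exact lt_of_lt_of_le (mul_pos he h) hle

lemma Pp_theta_lb (hnn : ∀ t i j, 0 ≤ A t i j) {θ : ℝ} (hθ0 : 0 < θ)
    (hθA : ∀ t i j, A t i j ≠ 0 → θ ≤ A t i j)
    {s k : ℕ} {i j : Fin N} (h : 0 < Pp A s k i j) : θ ^ k ≤ Pp A s k i j := by
  induction k generalizing i j with
  | zero =>
    by_cases hij : i = j
    · simp [Pp, Matrix.one_apply, hij]
    · simp [Pp, Matrix.one_apply, hij] at h
  | succ k ih =>
    simp only [Pp, Matrix.mul_apply] at h ⊢
    obtain ⟨m, -, hm⟩ : ∃ m ∈ Finset.univ, 0 < A (s+k) i m * Pp A s k m j := by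
      by_contra hc
      push_neg at hc
      have : ∑ m, A (s+k) i m * Pp A s k m j ≤ 0 :=
        Finset.sum_nonpos fun m hmu => hc m hmu
      linarith
    have hA : 0 < A (s+k) i m := by
      rcases (mul_pos_iff.mp hm) with ⟨h1, _⟩ | ⟨h1, h2⟩
      · exact h1
      · exact absurd h2 (not_lt.mpr (Pp_nonneg hnn _ _ _ _))
    have hPm : 0 < Pp A s k m j := by
      rcases (mul_pos_iff.mp hm) with ⟨_, h2⟩ | ⟨h1, _⟩
      · exact h2
      · exact absurd h1 (not_lt.mpr (hnn _ _ _))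
    have h1 : θ ≤ A (s+k) i m := hθA _ _ _ (ne_of_gt hA)
    have h2 : θ ^ k ≤ Pp A s k m j := ih hPm
    calc θ ^ (k+1) = θ * θ ^ k := by ring
      _ ≤ A (s+k) i m * Pp A s k m j := by
          exact mul_le_mul h1 h2 (le_of_lt (pow_pos hθ0 k)) (le_of_lt hA)
      _ ≤ ∑ m', A (s+k) i m' * Pp A s k m' j :=
          Finset.single_le_sum (f := fun m' => A (s+k) i m' * Pp A s k m' j)
            (fun m' _ => mul_nonneg (hnn _ _ _) (Pp_nonneg hnn _ _ _ _)) (Finset.mem_univ m)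

lemma Pp_add (A : ℕ → Matrix (Fin N) (Fin N) ℝ) (s k l : ℕ) :
    Pp A s (k + l) = Pp A (s + k) l * Pp A s k := by
  induction l with
  | zero => simp [Pp]
  | succ l ih =>
    show Pp A s ((k + l) + 1) = _
    rw [Pp, ih]
    show A (s + (k + l)) * _ = (A ((s + k) + l) * Pp A (s+k) l) * Pp A s k
    rw [add_assoc, Matrix.mul_assoc]

lemma Pp_all_pos (hnn : ∀ t i j, 0 ≤ A t i j) (hdiag : ∀ t i, 0 < A t i i)
    {T : ℕ}
    (hTconn : ∀ t : ℕ, ∀ i j : Fin N,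
      Relation.ReflTransGen (fun u v : Fin N => ∃ s < T, 0 < A (t + s) v u) i j)
    (t : ℕ) (i j : Fin N) : 0 < Pp A t (N * T) i j := by
  classical
  set R : ℕ → Finset (Fin N) := fun k => univ.filter (fun v => 0 < Pp A t (k * T) v j) with hR
  have hmemR : ∀ k v, v ∈ R k ↔ 0 < Pp A t (k * T) v j := by
    intro k v; simp [hR]
  have hRmono : ∀ k, R k ⊆ R (k + 1) := by
    intro k v hv
    rw [hmemR] at hv ⊢
    have := Pp_pos_add hnn hdiag hv T
    have he : k * T + T = (k + 1) * T := by ring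
    rwa [he] at this
  have hjR : ∀ k, j ∈ R k := by
    intro k; rw [hmemR]; exact Pp_diag_pos hnn hdiag _ _ _
  have hhop : ∀ k (v w : Fin N), v ∈ R k → (∃ s < T, 0 < A (t + k * T + s) w v) →
      w ∈ R (k + 1) := by
    rintro k v w hv ⟨s, hs, he⟩
    rw [hmemR] at hv ⊢
    have h1 : 0 < Pp A t (k * T + s) v j := Pp_pos_add hnn hdiag hv s
    have he' : 0 < A (t + (k * T + s)) w v := by rwa [← add_assoc]
    have h2 : 0 < Pp A t (k * T + s + 1) w j := Pp_hop hnn h1 he'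
    have h3 := Pp_pos_add hnn hdiag h2 (T - (s + 1))
    have heq : k * T + s + 1 + (T - (s + 1)) = (k + 1) * T := by
      have h1' : s + 1 ≤ T := hs
      have h2' : (k + 1) * T = k * T + T := by ring
      omega
    rwa [heq] at h3
  have hgrow : ∀ k, i ∉ R k → ∃ v, v ∈ R (k + 1) ∧ v ∉ R k := by
    intro k hi
    have hpath := hTconn (t + k * T) j i
    have key : ∀ w : Fin N,
        Relation.ReflTransGen (fun u v : Fin N => ∃ s < T, 0 < A (t + k * T + s) v u) j w →
        w ∈ R k ∨ ∃ v, v ∈ R (k + 1) ∧ v ∉ R k := by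
      intro w hw
      induction hw with
      | refl => exact Or.inl (hjR k)
      | @tail b c hab hbc ih =>
        rcases ih with hmem | hnew
        · by_cases hc : c ∈ R k
          · exact Or.inl hc
          · exact Or.inr ⟨c, hhop k b c hmem hbc, hc⟩
        · exact Or.inr hnew
    rcases key i hpath with hmem | hnew
    · exact absurd hmem hi
    · exact hnew
  have hcard : ∀ k, i ∈ R k ∨ k + 1 ≤ (R k).card := by
    intro k
    induction k with
    | zero =>
      by_cases h : i ∈ R 0
      · exact Or.inl h
      · exact Or.inr (Finset.card_pos.mpr ⟨j, hjR 0⟩)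
    | succ k ih =>
      rcases ih with hi | hc
      · exact Or.inl (hRmono k hi)
      · by_cases h : i ∈ R (k + 1)
        · exact Or.inl h
        · right
          have hik : i ∉ R k := fun hik => h (hRmono k hik)
          obtain ⟨v, hv1, hv2⟩ := hgrow k hik
          have hsub : insert v (R k) ⊆ R (k + 1) :=
            Finset.insert_subset hv1 (hRmono k)
          have := Finset.card_le_card hsub
          rw [Finset.card_insert_of_notMem hv2] at this
          omega
  rcases hcard N with hi | hc
  · rwa [hmemR] at hi
  · have : (R N).card ≤ N := le_trans (Finset.card_le_univ _) (by simp)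
    omega

/-- Dobrushin-type contraction for column-stochastic matrices with entries ≥ η. -/
lemma dobrushin (P : Matrix (Fin N) (Fin N) ℝ) (η : ℝ)
    (hP : ∀ i j, η ≤ P i j) (hcolP : ∀ j, ∑ i, P i j = 1)
    (u : Fin N → ℝ) (hu : ∑ j, u j = 0) :
    ∑ i, |∑ j, P i j * u j| ≤ (1 - N * η) * ∑ i, |u i| := by
  have hrw : ∀ i, ∑ j, P i j * u j = ∑ j, (P i j - η) * u j := by
    intro i
    rw [← sub_eq_zero, ← Finset.sum_sub_distrib]
    have : ∀ j, P i j * u j - (P i j - η) * u j = η * u j := by intro j; ring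
    simp only [this, ← Finset.mul_sum, hu, mul_zero]
  calc ∑ i, |∑ j, P i j * u j| = ∑ i, |∑ j, (P i j - η) * u j| := by simp only [hrw]
    _ ≤ ∑ i, ∑ j, |(P i j - η) * u j| :=
        Finset.sum_le_sum fun i _ => Finset.abs_sum_le_sum_abs _ _
    _ = ∑ j, (∑ i, (P i j - η)) * |u j| := by
        rw [Finset.sum_comm]
        congr 1; ext j
        rw [Finset.sum_mul]
        congr 1; ext i
        rw [abs_mul, abs_of_nonneg (by linarith [hP i j])]
    _ = ∑ j, (1 - N * η) * |u j| := by
        congr 1; ext j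
        rw [Finset.sum_sub_distrib, hcolP j]
        simp [mul_comm]
    _ = (1 - N * η) * ∑ i, |u i| := by rw [Finset.mul_sum]

end PushSumAux

open PushSumAux Filter

/-- Push-sum consensus. Let `{A^t}` be column stochastic matrices with
nonzero entries at least `θ ∈ (0,1)`, positive diagonal entries, whose induced digraphs
are `T`-strongly connected. Let `φ^0 > 0` with `∑_i φ_i^0 = 1`, `x_i^0 ∈ ℝ^d`, and run the
push-sum recursion `φ^{t+1} = A^t φ^t`,
`x_i^{t+1} = (1/φ_i^{t+1}) ∑_j (A^t)_{ij} φ_j^t x_j^t`. Then every node's state `x_i^t`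
converges to the weighted average `∑_k φ_k^0 x_k^0`. -/
theorem push_sum_consensus
    (N d : ℕ) (hN : 0 < N)
    (A : ℕ → Matrix (Fin N) (Fin N) ℝ)
    -- each `A^t` is column stochastic
    (hnonneg : ∀ t i j, 0 ≤ A t i j)
    (hcol : ∀ t j, ∑ i, A t i j = 1)
    -- every nonzero entry is at least `θ ∈ (0,1)`
    (θ : ℝ) (hθ : θ ∈ Set.Ioo (0:ℝ) 1)
    (hθA : ∀ t i j, A t i j ≠ 0 → θ ≤ A t i j)
    -- positive diagonal entries
    (hdiag : ∀ t i, 0 < A t i i)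
    -- `T`-strong connectivity of the induced digraphs (edge `(j,i)` iff `(A^t)_{ij} > 0`)
    (T : ℕ) (hT : 0 < T)
    (hTconn : ∀ t : ℕ, ∀ i j : Fin N,
      Relation.ReflTransGen (fun u v : Fin N => ∃ s < T, 0 < A (t + s) v u) i j)
    -- weights and states
    (φ : ℕ → Fin N → ℝ) (x : ℕ → Fin N → EuclideanSpace ℝ (Fin d))
    (hφ0pos : ∀ i, 0 < φ 0 i) (hφ0sum : ∑ i, φ 0 i = 1)
    -- push-sum recursion
    (hφ : ∀ t i, φ (t + 1) i = ∑ j, A t i j * φ t j)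
    (hφpos : ∀ t i, 0 < φ t i)
    (hx : ∀ t i, x (t + 1) i = (1 / φ (t + 1) i) • ∑ j, (A t i j * φ t j) • x t j) :
    ∀ i, Filter.Tendsto (fun t => ‖x t i - ∑ k, φ 0 k • x 0 k‖)
      Filter.atTop (nhds 0) := by
  classical
  obtain ⟨hθ0, hθ1⟩ := hθ
  set B := N * T with hBdef
  have hBpos : 0 < B := Nat.mul_pos hN hT
  set η := θ ^ B with hηdef
  have hηpos : 0 < η := pow_pos hθ0 B
  -- all entries of products over B steps are at least η
  have hPlb : ∀ s (i j : Fin N), η ≤ Pp A s B i j := fun s i j =>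
    Pp_theta_lb hnonneg hθ0 hθA (Pp_all_pos hnonneg hdiag hTconn s i j)
  -- N * η ≤ 1
  have i0 : Fin N := ⟨0, hN⟩
  have hNη : (N:ℝ) * η ≤ 1 := by
    have h1 : ∑ i, Pp A 0 B i i0 = 1 := Pp_colsum hcol 0 B i0
    have h2 : ∑ i : Fin N, η ≤ ∑ i, Pp A 0 B i i0 :=
      Finset.sum_le_sum fun i _ => hPlb 0 i i0
    simp only [Finset.sum_const, Finset.card_univ, Fintype.card_fin, nsmul_eq_mul] at h2
    linarith
  set lam := 1 - (N:ℝ) * η with hlamdef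
  have hlam0 : 0 ≤ lam := by simp [hlamdef]; linarith
  have hlam1 : lam < 1 := by
    have : 0 < (N:ℝ) * η := mul_pos (by exact_mod_cast hN) hηpos
    simp [hlamdef]; linarith
  -- representation of φ in terms of products
  have hφrep : ∀ s k i, φ (s + k) i = ∑ j, Pp A s k i j * φ s j := by
    intro s k
    induction k with
    | zero => intro i; simp [Pp, Matrix.one_apply]
    | succ k ih =>
      intro i
      have : s + (k + 1) = (s + k) + 1 := by ring
      rw [this, hφ]
      have : ∀ m, φ (s + k) m = ∑ j, Pp A s k m j * φ s j := ih
      calc ∑ m, A (s+k) i m * φ (s+k) m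
          = ∑ m, ∑ j, A (s+k) i m * (Pp A s k m j * φ s j) := by
            simp only [this, Finset.mul_sum]
        _ = ∑ j, (∑ m, A (s+k) i m * Pp A s k m j) * φ s j := by
            rw [Finset.sum_comm]
            congr 1; ext j
            rw [Finset.sum_mul]
            congr 1; ext m; ring
        _ = ∑ j, Pp A s (k+1) i j * φ s j := by
            simp only [Pp, Matrix.mul_apply]
  -- mass conservation
  have hsum1 : ∀ t, ∑ j, φ t j = 1 := by
    intro t
    induction t with
    | zero => exact hφ0sum
    | succ t ih =>
      calc ∑ i, φ (t+1) i = ∑ i, ∑ j, A t i j * φ t j := by simp only [hφ]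
        _ = ∑ j, (∑ i, A t i j) * φ t j := by
            rw [Finset.sum_comm]; congr 1; ext j; rw [Finset.sum_mul]
        _ = 1 := by simp [hcol, ih]
  -- lower bound on φ
  have hφlb : ∀ t, B ≤ t → ∀ i, η ≤ φ t i := by
    intro t ht i
    have hts : t - B + B = t := Nat.sub_add_cancel ht
    have h1 : φ t i = ∑ j, Pp A (t - B) B i j * φ (t - B) j := by
      conv_lhs => rw [← hts]
      exact hφrep (t - B) B i
    rw [h1]
    calc η = η * ∑ j, φ (t - B) j := by rw [hsum1] ; ring
      _ ≤ ∑ j, Pp A (t - B) B i j * φ (t - B) j := by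
          rw [Finset.mul_sum]
          exact Finset.sum_le_sum fun j _ =>
            mul_le_mul_of_nonneg_right (hPlb _ _ _) (le_of_lt (hφpos _ _))
      _ = _ := rfl
  -- representation of weighted states
  have hyrep : ∀ t i, φ t i • x t i = ∑ j, (Pp A 0 t i j * φ 0 j) • x 0 j := by
    intro t
    induction t with
    | zero => intro i; simp [Pp, Matrix.one_apply]
    | succ t ih =>
      intro i
      have hpos := hφpos (t+1) i
      have h1 : φ (t+1) i • x (t+1) i = ∑ m, (A t i m * φ t m) • x t m := by
        rw [hx, smul_smul]
        rw [mul_one_div_cancel (ne_of_gt hpos), one_smul]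
      rw [h1]
      calc ∑ m, (A t i m * φ t m) • x t m
          = ∑ m, A t i m • (φ t m • x t m) := by
            congr 1; ext m; rw [smul_smul]
        _ = ∑ m, A t i m • ∑ j, (Pp A 0 t m j * φ 0 j) • x 0 j := by
            simp only [ih]
        _ = ∑ j, (∑ m, A t i m * Pp A 0 t m j) • (φ 0 j • x 0 j) := by
            simp only [Finset.smul_sum]
            rw [Finset.sum_comm]
            congr 1; ext j
            rw [Finset.sum_smul]
            simp only [smul_smul, mul_assoc]
        _ = ∑ j, (Pp A 0 (t+1) i j * φ 0 j) • x 0 j := by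
            congr 1; ext j
            have : Pp A 0 (t+1) i j = ∑ m, A t i m * Pp A 0 t m j := by
              show (A (0+t) * Pp A 0 t) i j = _
              rw [Matrix.mul_apply]
              simp
            rw [this, smul_smul]
  -- contraction of column differences
  have hcontr : ∀ (j k : Fin N) (t : ℕ),
      ∑ i, |Pp A 0 (t + B) i j - Pp A 0 (t + B) i k| ≤
        lam * ∑ i, |Pp A 0 t i j - Pp A 0 t i k| := by
    intro j k t
    have hPadd : Pp A 0 (t + B) = Pp A t B * Pp A 0 t := by
      have := Pp_add A 0 t B
      simpa using this
    set u : Fin N → ℝ := fun m => Pp A 0 t m j - Pp A 0 t m k with hu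
    have husum : ∑ m, u m = 0 := by
      simp [hu, Finset.sum_sub_distrib, Pp_colsum hcol]
    have hentry : ∀ i, Pp A 0 (t + B) i j - Pp A 0 (t + B) i k =
        ∑ m, Pp A t B i m * u m := by
      intro i
      rw [hPadd]
      simp only [Matrix.mul_apply, hu]
      rw [← Finset.sum_sub_distrib]
      congr 1; ext m; ring
    simp only [hentry]
    exact dobrushin (Pp A t B) η (hPlb t) (Pp_colsum hcol t B) u husum
  -- geometric decay of column differences
  have hD : ∀ (j k : Fin N) (t : ℕ),
      ∑ i, |Pp A 0 t i j - Pp A 0 t i k| ≤ 2 * lam ^ (t / B) := by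
    intro j k t
    induction t using Nat.strong_induction_on with
    | _ t ih =>
      by_cases ht : t < B
      · rw [Nat.div_eq_of_lt ht, pow_zero, mul_one]
        calc ∑ i, |Pp A 0 t i j - Pp A 0 t i k|
            ≤ ∑ i, (|Pp A 0 t i j| + |Pp A 0 t i k|) :=
              Finset.sum_le_sum fun i _ => abs_sub _ _
          _ = 2 := by
              rw [Finset.sum_add_distrib]
              have e1 : ∑ i, |Pp A 0 t i j| = 1 := by
                rw [show (∑ i, |Pp A 0 t i j|) = ∑ i, Pp A 0 t i j from
                  Finset.sum_congr rfl fun i _ => abs_of_nonneg (Pp_nonneg hnonneg _ _ _ _)]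
                exact Pp_colsum hcol 0 t j
              have e2 : ∑ i, |Pp A 0 t i k| = 1 := by
                rw [show (∑ i, |Pp A 0 t i k|) = ∑ i, Pp A 0 t i k from
                  Finset.sum_congr rfl fun i _ => abs_of_nonneg (Pp_nonneg hnonneg _ _ _ _)]
                exact Pp_colsum hcol 0 t k
              rw [e1, e2]; norm_num
      · push_neg at ht
        have hts : t - B + B = t := Nat.sub_add_cancel ht
        have hlt : t - B < t := by omega
        have hdiv : t / B = (t - B) / B + 1 := by
          conv_lhs => rw [← hts]
          rw [Nat.add_div_right _ hBpos]
        calc ∑ i, |Pp A 0 t i j - Pp A 0 t i k|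
            = ∑ i, |Pp A 0 (t - B + B) i j - Pp A 0 (t - B + B) i k| := by rw [hts]
          _ ≤ lam * ∑ i, |Pp A 0 (t - B) i j - Pp A 0 (t - B) i k| := hcontr j k (t - B)
          _ ≤ lam * (2 * lam ^ ((t - B) / B)) :=
              mul_le_mul_of_nonneg_left (ih _ hlt) hlam0
          _ = 2 * lam ^ ((t - B) / B + 1) := by ring
          _ = 2 * lam ^ (t / B) := by rw [hdiv]
  -- final estimate
  intro i
  set S := ∑ k, φ 0 k • x 0 k with hS
  set Mx := ∑ l, ‖x 0 l‖ with hMx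
  have hMx0 : 0 ≤ Mx := Finset.sum_nonneg fun l _ => norm_nonneg _
  have hbound : ∀ t, B ≤ t → ‖x t i - S‖ ≤ (2 * Mx / η) * lam ^ (t / B) := by
    intro t ht
    have hφt : 0 < φ t i := hφpos t i
    -- difference of entries bound
    have hdiff : ∀ j : Fin N, |Pp A 0 t i j - φ t i| ≤ 2 * lam ^ (t / B) := by
      intro j
      have hrepr : φ t i = ∑ k, Pp A 0 t i k * φ 0 k := by
        have := hφrep 0 t i
        simpa using this
      have h1 : Pp A 0 t i j - φ t i = ∑ k, φ 0 k * (Pp A 0 t i j - Pp A 0 t i k) := by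
        simp only [mul_sub]
        rw [Finset.sum_sub_distrib, ← Finset.sum_mul, hφ0sum, one_mul, hrepr]
        exact congrArg _ (Finset.sum_congr rfl fun k _ => mul_comm _ _)
      rw [h1]
      calc |∑ k, φ 0 k * (Pp A 0 t i j - Pp A 0 t i k)|
          ≤ ∑ k, |φ 0 k * (Pp A 0 t i j - Pp A 0 t i k)| := Finset.abs_sum_le_sum_abs _ _
        _ ≤ ∑ k, φ 0 k * (2 * lam ^ (t / B)) := by
            apply Finset.sum_le_sum
            intro k _
            rw [abs_mul, abs_of_nonneg (le_of_lt (hφ0pos k))]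
            apply mul_le_mul_of_nonneg_left _ (le_of_lt (hφ0pos k))
            calc |Pp A 0 t i j - Pp A 0 t i k|
                ≤ ∑ m, |Pp A 0 t m j - Pp A 0 t m k| :=
                  Finset.single_le_sum (f := fun m => |Pp A 0 t m j - Pp A 0 t m k|)
                    (fun m _ => abs_nonneg _) (Finset.mem_univ i)
              _ ≤ 2 * lam ^ (t / B) := hD j k t
        _ = 2 * lam ^ (t / B) := by rw [← Finset.sum_mul, hφ0sum, one_mul]
    -- the smul identity
    have hid : φ t i • (x t i - S) = ∑ j, ((Pp A 0 t i j - φ t i) * φ 0 j) • x 0 j := by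
      rw [smul_sub, hyrep t i, hS, Finset.smul_sum]
      rw [← Finset.sum_sub_distrib]
      congr 1; funext j
      rw [smul_smul, ← sub_smul]
      congr 1; ring
    have hnorm : ‖φ t i • (x t i - S)‖ ≤ (2 * lam ^ (t / B)) * Mx := by
      rw [hid]
      calc ‖∑ j, ((Pp A 0 t i j - φ t i) * φ 0 j) • x 0 j‖
          ≤ ∑ j, ‖((Pp A 0 t i j - φ t i) * φ 0 j) • x 0 j‖ := norm_sum_le _ _
        _ ≤ ∑ j, (2 * lam ^ (t / B)) * φ 0 j * ‖x 0 j‖ := by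
            apply Finset.sum_le_sum
            intro j _
            rw [norm_smul]
            apply mul_le_mul_of_nonneg_right _ (norm_nonneg _)
            rw [Real.norm_eq_abs, abs_mul, abs_of_nonneg (le_of_lt (hφ0pos j))]
            exact mul_le_mul_of_nonneg_right (hdiff j) (le_of_lt (hφ0pos j))
        _ ≤ ∑ j, (2 * lam ^ (t / B)) * φ 0 j * Mx := by
            apply Finset.sum_le_sum
            intro j _
            apply mul_le_mul_of_nonneg_left _
              (mul_nonneg (by positivity) (le_of_lt (hφ0pos j)))
            exact Finset.single_le_sum (f := fun l => ‖x 0 l‖)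
              (fun l _ => norm_nonneg _) (Finset.mem_univ j)
        _ = (2 * lam ^ (t / B)) * Mx := by
            rw [← Finset.sum_mul, ← Finset.mul_sum, hφ0sum, mul_one]
    have hnorm2 : ‖x t i - S‖ = (1 / φ t i) * ‖φ t i • (x t i - S)‖ := by
      rw [norm_smul, Real.norm_eq_abs, abs_of_pos hφt]
      field_simp
    rw [hnorm2]
    have hη_le : η ≤ φ t i := hφlb t ht i
    have h1φ : 1 / φ t i ≤ 1 / η := by
      apply one_div_le_one_div_of_le hηpos hη_le
    calc (1 / φ t i) * ‖φ t i • (x t i - S)‖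
        ≤ (1 / η) * ((2 * lam ^ (t / B)) * Mx) := by
          apply mul_le_mul h1φ hnorm (norm_nonneg _)
          positivity
      _ = (2 * Mx / η) * lam ^ (t / B) := by ring
  -- convergence
  have hlim : Tendsto (fun t : ℕ => (2 * Mx / η) * lam ^ (t / B)) atTop (nhds 0) := by
    have h1 : Tendsto (fun n : ℕ => lam ^ n) atTop (nhds 0) :=
      tendsto_pow_atTop_nhds_zero_of_lt_one hlam0 hlam1
    have h2 : Tendsto (fun t : ℕ => t / B) atTop atTop :=
      Filter.tendsto_atTop_atTop.mpr fun b =>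
        ⟨b * B, fun t ht => (Nat.le_div_iff_mul_le hBpos).mpr ht⟩
    have := (h1.comp h2).const_mul (2 * Mx / η)
    simpa using this
  apply squeeze_zero' (Filter.Eventually.of_forall fun t => norm_nonneg _) _ hlim
  filter_upwards [Filter.eventually_ge_atTop B] with t ht
  exact hbound t ht
end

section
/- Let θ > 0 and set η(θ) = θ / log(1+θ). Then the function g₀⁻ : ℝ → ℝ defined by g₀⁻(x) = η(θ)|x| − log(1 + θ|x|)/log(1+θ) is convex on ℝ. -/
open Set Real

lemma log_concave_aux (θ : ℝ) (hθ : 0 < θ) :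
    ConcaveOn ℝ (Ici (0:ℝ)) (fun t => Real.log (1 + θ * t)) := by
  have hmap : ∀ t : ℝ, (AffineMap.const ℝ ℝ (1:ℝ) + θ • AffineMap.id ℝ ℝ) t = 1 + θ * t := by
    intro t; simp
  have haff := (strictConcaveOn_log_Ioi.concaveOn).comp_affineMap
      (AffineMap.const ℝ ℝ (1:ℝ) + θ • AffineMap.id ℝ ℝ)
  have hsub : Ici (0:ℝ) ⊆ (AffineMap.const ℝ ℝ (1:ℝ) + θ • AffineMap.id ℝ ℝ) ⁻¹' (Ioi 0) := by
    intro t ht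
    have : (0:ℝ) ≤ θ * t := mul_nonneg hθ.le ht
    simp only [mem_preimage, hmap, mem_Ioi]
    linarith
  have h := haff.subset hsub (convex_Ici 0)
  exact h

lemma g_mono_aux (θ : ℝ) (hθ : 0 < θ) {a b : ℝ} (ha : 0 ≤ a) (hab : a ≤ b) :
    Real.log (1 + θ * b) - Real.log (1 + θ * a) ≤ θ * (b - a) := by
  have h1 : (0:ℝ) < 1 + θ * a := by nlinarith
  have h2 : (0:ℝ) < 1 + θ * b := by nlinarith
  have key := Real.log_le_sub_one_of_pos (x := (1 + θ * b) / (1 + θ * a)) (by positivity)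
  rw [Real.log_div h2.ne' h1.ne'] at key
  have h3 : (1 + θ * b) / (1 + θ * a) - 1 = θ * (b - a) / (1 + θ * a) := by
    field_simp; ring
  rw [h3] at key
  refine key.trans ?_
  rw [div_le_iff₀ h1]
  nlinarith [mul_nonneg (mul_nonneg hθ.le (sub_nonneg.2 hab)) (mul_nonneg hθ.le ha)]

/-- For `θ > 0` and `η(θ) = θ / log(1+θ)`, the function
`g₀⁻(x) = η(θ)|x| − log(1 + θ|x|)/log(1+θ)` is convex on `ℝ`. -/
theorem dc_decomposition_concave_part_convex
    (θ : ℝ) (hθ : 0 < θ) :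
    ConvexOn ℝ Set.univ
      (fun x : ℝ => (θ / Real.log (1 + θ)) * |x|
        - Real.log (1 + θ * |x|) / Real.log (1 + θ)) := by
  have hL : 0 < Real.log (1 + θ) := Real.log_pos (by linarith)
  set g : ℝ → ℝ := fun t => (θ / Real.log (1 + θ)) * t
      - Real.log (1 + θ * t) / Real.log (1 + θ) with hg
  have habs : ConvexOn ℝ (univ : Set ℝ) (fun x : ℝ => |x|) := by
    exact (convexOn_univ_norm (E := ℝ))
  have himg : (fun x : ℝ => |x|) '' univ = Ici (0:ℝ) := by
    ext y
    constructor
    · rintro ⟨x, -, rfl⟩; exact abs_nonneg x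
    · intro hy; exact ⟨y, trivial, abs_of_nonneg hy⟩
  -- g is convex on Ici 0
  have hgconv : ConvexOn ℝ (Ici (0:ℝ)) g := by
    have h1 : ConvexOn ℝ (Ici (0:ℝ)) (fun t => (θ / Real.log (1 + θ)) * t) :=
      (convexOn_id (convex_Ici 0)).smul (by positivity)
    have h2 : ConvexOn ℝ (Ici (0:ℝ))
        (fun t => -((Real.log (1 + θ))⁻¹ * Real.log (1 + θ * t))) :=
      ((log_concave_aux θ hθ).smul (c := (Real.log (1+θ))⁻¹) (by positivity)).neg
    have h12 := h1.add h2
    convert h12 using 1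
    · rfl
    funext t
    simp only [hg, Pi.add_apply]
    rw [div_eq_inv_mul]
    ring
  -- g is monotone on Ici 0
  have hgmono : MonotoneOn g (Ici (0:ℝ)) := by
    intro a ha b _ hab
    simp only [hg]
    have key := g_mono_aux θ hθ ha hab
    have h5 : (Real.log (1 + θ * b) - Real.log (1 + θ * a)) / Real.log (1+θ)
        ≤ θ * (b - a) / Real.log (1+θ) := by gcongr
    rw [sub_div] at h5
    have h6 : θ * (b - a) / Real.log (1+θ)
        = θ / Real.log (1+θ) * b - θ / Real.log (1+θ) * a := by ring
    rw [h6] at h5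
    linarith
  exact ConvexOn.comp (himg ▸ hgconv) habs (himg ▸ hgmono)
end

section
/- Let θ > 0 and set η(θ) = θ / log(1+θ). The function g₀⁻ : ℝ → ℝ defined by g₀⁻(x) = η(θ)|x| − log(1 + θ|x|)/log(1+θ) is differentiable at every x ∈ ℝ, with derivative (g₀⁻)'(x) = sign(x) · θ²|x| / (log(1+θ)(1 + θ|x|)) (in particular (g₀⁻)'(0) = 0), and this derivative is Lipschitz continuous on ℝ with Lipschitz constant θ²/log(1+θ). -/
lemma my_sign_mul_abs (x : ℝ) : Real.sign x * |x| = x := by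
  rcases lt_trichotomy x 0 with h | h | h
  · rw [Real.sign_of_neg h, abs_of_neg h]; ring
  · simp [h]
  · rw [Real.sign_of_pos h, abs_of_pos h]; ring

lemma my_lip_one (θ : ℝ) (hθ : 0 < θ) (a b : ℝ) :
    a / (1 + θ * |a|) - b / (1 + θ * |b|) ≤ |a - b| := by
  have hA : (0:ℝ) < 1 + θ * |a| := by positivity
  have hB : (0:ℝ) < 1 + θ * |b| := by positivity
  have hc1 : a - b ≤ |a - b| := le_abs_self _
  have hd : |(|b| - |a|)| ≤ |a - b| := by
    rw [abs_sub_comm a b]; exact abs_abs_sub_abs_le_abs_sub b a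
  have h1 : (a - b) * (|a| + |b|) ≤ |a - b| * (|a| + |b|) :=
    mul_le_mul_of_nonneg_right hc1 (by positivity)
  have h2 : (a + b) * (|b| - |a|) ≤ (|a| + |b|) * |a - b| := by
    refine le_trans (le_abs_self _) ?_
    rw [abs_mul]
    exact mul_le_mul (abs_add_le a b) hd (abs_nonneg _) (by positivity)
  have h3 : θ * ((a - b) * (|a| + |b|) + (a + b) * (|b| - |a|)) ≤
      θ * (2 * (|a - b| * (|a| + |b|))) :=
    mul_le_mul_of_nonneg_left (by linarith) hθ.le
  have h4 : (0:ℝ) ≤ θ^2 * (|a| * |b| * |a - b|) := by positivity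
  rw [div_sub_div _ _ (ne_of_gt hA) (ne_of_gt hB), div_le_iff₀ (by positivity)]
  nlinarith [h3, h4, hc1]

lemma my_lip (θ : ℝ) (hθ : 0 < θ) (a b : ℝ) :
    |a / (1 + θ * |a|) - b / (1 + θ * |b|)| ≤ |a - b| := by
  rw [abs_sub_le_iff]
  refine ⟨my_lip_one θ hθ a b, ?_⟩
  rw [abs_sub_comm]
  exact my_lip_one θ hθ b a

/-- For `θ > 0` and `η(θ) = θ / log(1+θ)`, the function
`g₀⁻(x) = η(θ)|x| − log(1 + θ|x|)/log(1+θ)` is differentiable everywhere, with derivative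
`(g₀⁻)'(x) = sign(x) · θ²|x| / (log(1+θ)(1 + θ|x|))` (so `(g₀⁻)'(0) = 0`), and this
derivative is Lipschitz on `ℝ` with constant `θ²/log(1+θ)`. -/
theorem dc_decomposition_concave_part_derivative
    (θ : ℝ) (hθ : 0 < θ)
    (g : ℝ → ℝ)
    (hg : ∀ x, g x = (θ / Real.log (1 + θ)) * |x|
      - Real.log (1 + θ * |x|) / Real.log (1 + θ))
    (g' : ℝ → ℝ)
    (hg' : ∀ x, g' x = Real.sign x * (θ ^ 2 * |x| / (Real.log (1 + θ) * (1 + θ * |x|)))) :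
    (∀ x, HasDerivAt g (g' x) x) ∧
    (g' 0 = 0) ∧
    (∀ a b, |g' a - g' b| ≤ (θ ^ 2 / Real.log (1 + θ)) * |a - b|) := by
  have hL : 0 < Real.log (1 + θ) := Real.log_pos (by linarith)
  set L := Real.log (1 + θ) with hLdef
  -- simplified form of g'
  have hg'' : ∀ x, g' x = (θ ^ 2 / L) * (x / (1 + θ * |x|)) := by
    intro x
    have hx1 : (0:ℝ) < 1 + θ * |x| := by positivity
    rw [hg' x]
    rcases lt_trichotomy x 0 with h | h | h
    · rw [Real.sign_of_neg h, abs_of_neg h]; field_simp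
    · simp [h]
    · rw [Real.sign_of_pos h, abs_of_pos h]; field_simp
  have hg0 : g' 0 = 0 := by simp [hg'']
  refine ⟨?_, hg0, ?_⟩
  · intro x
    rcases lt_trichotomy x 0 with h | h | h
    · -- negative case
      have hx1 : (0:ℝ) < 1 - θ * x := by nlinarith
      have h1 : HasDerivAt (fun y : ℝ => 1 - θ * y) (-θ) x := by
        simpa [Pi.sub_def] using (hasDerivAt_const x (1:ℝ)).sub ((hasDerivAt_id x).const_mul θ)
      have hlog : HasDerivAt (fun y => Real.log (1 - θ * y)) (-θ / (1 - θ * x)) x :=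
        h1.log (ne_of_gt hx1)
      have hφ : HasDerivAt (fun y => (θ / L) * (-y) - Real.log (1 - θ * y) / L)
          (-(θ / L) - (-θ / (1 - θ * x)) / L) x := by
        simpa [Pi.sub_def] using (((hasDerivAt_id x).neg.const_mul (θ / L)).sub (hlog.div_const L))
      have heq : HasDerivAt g (-(θ / L) - (-θ / (1 - θ * x)) / L) x := by
        refine hφ.congr_of_eventuallyEq ?_
        filter_upwards [Iio_mem_nhds h] with y hy
        rw [hg y, abs_of_neg hy]; ring_nf
      convert heq using 1
      rw [hg'' x, abs_of_neg h]
      have e : (1 : ℝ) + θ * -x = 1 - θ * x := by ring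
      rw [e]
      field_simp
      ring
    · -- zero case
      subst h
      have hgz : g 0 = 0 := by simp [hg]
      rw [hg0, hasDerivAt_iff_tendsto_slope]
      have hb : ∀ᶠ y in nhdsWithin 0 {(0:ℝ)}ᶜ, ‖slope g 0 y‖ ≤ (θ ^ 2 / L) * |y| := by
        filter_upwards [eventually_mem_nhdsWithin] with y hy
        have hy0 : y ≠ 0 := hy
        have hu : (0:ℝ) ≤ θ * |y| := by positivity
        have hu1 : (0:ℝ) < 1 + θ * |y| := by positivity
        have hlow : 1 - (1 + θ * |y|)⁻¹ ≤ Real.log (1 + θ * |y|) :=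
          Real.one_sub_inv_le_log_of_pos hu1
        have hup : Real.log (1 + θ * |y|) ≤ θ * |y| := by
          have := Real.log_le_sub_one_of_pos hu1
          linarith
        have hgy_nonneg : 0 ≤ g y := by
          rw [hg y]
          have e : (θ / L) * |y| - Real.log (1 + θ * |y|) / L
              = (θ * |y| - Real.log (1 + θ * |y|)) / L := by ring
          rw [e]
          exact div_nonneg (by linarith) hL.le
        have hgy_le : g y ≤ (θ ^ 2 / L) * y ^ 2 := by
          rw [hg y]
          have key : θ * |y| - Real.log (1 + θ * |y|) ≤ (θ * |y|) ^ 2 := by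
            have h2 : 1 - (1 + θ * |y|)⁻¹ = (θ * |y|) / (1 + θ * |y|) := by
              field_simp
              ring
            rw [h2] at hlow
            have h3 : (θ * |y|) - (θ * |y|) / (1 + θ * |y|)
                = (θ * |y|) ^ 2 / (1 + θ * |y|) := by
              field_simp; ring
            have h4 : (θ * |y|) ^ 2 / (1 + θ * |y|) ≤ (θ * |y|) ^ 2 := by
              apply div_le_self (by positivity) (by linarith)
            linarith
          have : (θ / L) * |y| - Real.log (1 + θ * |y|) / L
              = (θ * |y| - Real.log (1 + θ * |y|)) / L := by ring
          rw [this]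
          rw [div_le_iff₀ hL] at *
          calc θ * |y| - Real.log (1 + θ * |y|) ≤ (θ * |y|) ^ 2 := key
            _ = θ ^ 2 / L * y ^ 2 * L := by
                rw [mul_pow, sq_abs]; field_simp
        have hslope : slope g 0 y = g y / y := by
          simp [slope_def_field, hgz]
        rw [hslope, Real.norm_eq_abs, abs_div, abs_of_nonneg hgy_nonneg,
          div_le_iff₀ (abs_pos.2 hy0)]
        calc g y ≤ (θ ^ 2 / L) * y ^ 2 := hgy_le
          _ = θ ^ 2 / L * |y| * |y| := by rw [← sq_abs y]; ring
      refine squeeze_zero_norm' hb ?_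
      have : Filter.Tendsto (fun y : ℝ => (θ ^ 2 / L) * |y|) (nhds 0) (nhds 0) := by
        have := (continuous_const.mul continuous_abs : Continuous fun y : ℝ => (θ ^ 2 / L) * |y|).tendsto (0:ℝ)
        simpa [Pi.mul_def] using this
      exact this.mono_left nhdsWithin_le_nhds
    · -- positive case
      have hx1 : (0:ℝ) < 1 + θ * x := by positivity
      have h1 : HasDerivAt (fun y : ℝ => 1 + θ * y) θ x := by
        simpa using ((hasDerivAt_id x).const_mul θ).const_add 1
      have hlog : HasDerivAt (fun y => Real.log (1 + θ * y)) (θ / (1 + θ * x)) x :=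
        h1.log (ne_of_gt hx1)
      have hφ : HasDerivAt (fun y => (θ / L) * y - Real.log (1 + θ * y) / L)
          (θ / L - (θ / (1 + θ * x)) / L) x := by
        simpa [Pi.sub_def] using (((hasDerivAt_id x).const_mul (θ / L)).sub (hlog.div_const L))
      have heq : HasDerivAt g (θ / L - (θ / (1 + θ * x)) / L) x := by
        refine hφ.congr_of_eventuallyEq ?_
        filter_upwards [Ioi_mem_nhds h] with y hy
        rw [hg y, abs_of_pos hy]
      convert heq using 1
      rw [hg'' x, abs_of_pos h]
      field_simp
      ring
  · intro a b
    rw [hg'' a, hg'' b, ← mul_sub, abs_mul, abs_of_pos (by positivity : (0:ℝ) < θ ^ 2 / L)]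
    exact mul_le_mul_of_nonneg_left (my_lip θ hθ a b) (by positivity)
end

section
/- Let F : ℝ^m → ℝ be differentiable, λ ≥ 0, and let K = [k_L, k_U]^m ⊆ ℝ^m be a box with k_L ≤ k_U. For x* ∈ K the following are equivalent: (i) for all y ∈ K, ⟨∇F(x*), y − x*⟩ + λ(‖y‖₁ − ‖x*‖₁) ≥ 0; (ii) x* = P_K(S_λ(x* − ∇F(x*))), where S_λ acts componentwise by S_λ(u)_j = sign(u_j)·max(|u_j| − λ, 0) and P_K is the componentwise projection (clamp) onto [k_L, k_U]. -/
set_option maxHeartbeats 1000000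


open scoped RealInnerProductSpace

private lemma soft_facts (u lam : ℝ) (hlam : 0 ≤ lam) :
    |u - Real.sign u * max (|u| - lam) 0| ≤ lam ∧
    (u - Real.sign u * max (|u| - lam) 0) * (Real.sign u * max (|u| - lam) 0)
      = lam * |Real.sign u * max (|u| - lam) 0| := by
  rcases lt_trichotomy u 0 with h | h | h
  · rw [Real.sign_of_neg h, abs_of_neg h]
    rcases le_or_gt (-u - lam) 0 with h2 | h2
    · rw [max_eq_right h2]
      refine ⟨?_, by simp⟩
      rw [abs_le]; constructor <;> simp <;> linarith
    · rw [max_eq_left h2.le]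
      have hs : (-1 : ℝ) * (-u - lam) = u + lam := by ring
      rw [hs]
      have hneg : u + lam < 0 := by linarith
      rw [abs_of_neg hneg]
      constructor
      · rw [show u - (u + lam) = -lam by ring, abs_neg, abs_of_nonneg hlam]
      · ring
  · subst h; simp [hlam]
  · rw [Real.sign_of_pos h, abs_of_pos h]
    rcases le_or_gt (u - lam) 0 with h2 | h2
    · rw [max_eq_right h2]
      refine ⟨?_, by simp⟩
      rw [abs_le]; constructor <;> simp <;> linarith
    · rw [max_eq_left h2.le, one_mul]
      rw [abs_of_pos h2]
      constructor
      · rw [show u - (u - lam) = lam by ring, abs_of_nonneg hlam]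
      · ring

private lemma VI_at_p (u lam kL kU s p : ℝ) (hlam : 0 ≤ lam) (hk : kL ≤ kU)
    (hf1 : |u - s| ≤ lam) (hf2 : (u - s) * s = lam * |s|)
    (hp : p = min kU (max kL s)) :
    ∀ t ∈ Set.Icc kL kU, 0 ≤ (p - u) * (t - p) + lam * (|t| - |p|) := by
  have hf1' := abs_le.mp hf1
  have key : (0 < s → u - s = lam) ∧ (s < 0 → u - s = -lam) := by
    constructor
    · intro hss
      have h2 : (u - s) * s = lam * s := by rw [hf2, abs_of_pos hss]
      have := mul_right_cancel₀ (ne_of_gt hss) h2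
      linarith
    · intro hss
      have h2 : (u - s) * s = (-lam) * s := by rw [hf2, abs_of_neg hss]; ring
      have := mul_right_cancel₀ (ne_of_lt hss) h2
      linarith
  obtain ⟨keyp, keyn⟩ := key
  intro t ht
  obtain ⟨ht1, ht2⟩ := ht
  rcases lt_or_ge s kL with hsl | hsl
  · have hpe : p = kL := by rw [hp, max_eq_left hsl.le, min_eq_right hk]
    subst hpe
    rcases lt_trichotomy s 0 with hss | hss | hss
    · have h3 := keyn hss
      rcases abs_cases t with ⟨hat, _⟩ | ⟨hat, hat2⟩ <;>
        rcases abs_cases p with ⟨haL, haL2⟩ | ⟨haL, _⟩ <;>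
        rw [hat, haL] <;>
        nlinarith [mul_nonneg (by linarith : (0:ℝ) ≤ p - s) (by linarith : (0:ℝ) ≤ t - p),
          mul_nonneg hlam (by linarith : (0:ℝ) ≤ t - p)]
    · subst hss
      simp only [sub_zero] at hf1'
      obtain ⟨hu1, hu2⟩ := hf1'
      rcases abs_cases t with ⟨hat, _⟩ | ⟨hat, hat2⟩ <;>
        rcases abs_cases p with ⟨haL, haL2⟩ | ⟨haL, _⟩ <;>
        rw [hat, haL] <;>
        nlinarith [mul_nonneg (by linarith : (0:ℝ) ≤ lam - u) (by linarith : (0:ℝ) ≤ t - p),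
          mul_nonneg (by linarith : (0:ℝ) ≤ lam + u) (by linarith : (0:ℝ) ≤ t - p),
          mul_nonneg (le_of_lt hsl) (by linarith : (0:ℝ) ≤ t - p)]
    · have h3 := keyp hss
      rcases abs_cases t with ⟨hat, _⟩ | ⟨hat, hat2⟩ <;>
        rcases abs_cases p with ⟨haL, haL2⟩ | ⟨haL, _⟩ <;>
        rw [hat, haL] <;>
        nlinarith [mul_nonneg (by linarith : (0:ℝ) ≤ p - s) (by linarith : (0:ℝ) ≤ t - p),
          mul_nonneg hlam (by linarith : (0:ℝ) ≤ t - p)]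
  · rcases le_or_gt s kU with hsu | hsu
    · have hpe : p = s := by rw [hp, max_eq_right hsl, min_eq_right hsu]
      subst hpe
      -- subgradient inequality: lam|t| ≥ lam|p| + (u-p)(t-p)
      have h1 : (u - p) * t ≤ lam * |t| :=
        calc (u - p) * t ≤ |(u - p) * t| := le_abs_self _
          _ = |u - p| * |t| := abs_mul _ _
          _ ≤ lam * |t| := mul_le_mul_of_nonneg_right hf1 (abs_nonneg t)
      nlinarith [hf2, h1]
    · have hpe : p = kU := by
        rw [hp, min_eq_left (le_max_of_le_right hsu.le)]
      subst hpe
      rcases lt_trichotomy s 0 with hss | hss | hss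
      · have h3 := keyn hss
        rcases abs_cases t with ⟨hat, _⟩ | ⟨hat, hat2⟩ <;>
          rcases abs_cases p with ⟨haU, haU2⟩ | ⟨haU, _⟩ <;>
          rw [hat, haU] <;>
        nlinarith [mul_nonneg (by linarith : (0:ℝ) ≤ s - p) (by linarith : (0:ℝ) ≤ p - t),
          mul_nonneg hlam (by linarith : (0:ℝ) ≤ p - t)]
      · subst hss
        simp only [sub_zero] at hf1'
        obtain ⟨hu1, hu2⟩ := hf1'
        rcases abs_cases t with ⟨hat, _⟩ | ⟨hat, hat2⟩ <;>
          rcases abs_cases p with ⟨haU, haU2⟩ | ⟨haU, _⟩ <;>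
          rw [hat, haU] <;>
        nlinarith [mul_nonneg (by linarith : (0:ℝ) ≤ lam - u) (by linarith : (0:ℝ) ≤ p - t),
          mul_nonneg (by linarith : (0:ℝ) ≤ lam + u) (by linarith : (0:ℝ) ≤ p - t),
          mul_nonneg (by linarith : (0:ℝ) ≤ -p) (by linarith : (0:ℝ) ≤ p - t)]
      · have h3 := keyp hss
        rcases abs_cases t with ⟨hat, _⟩ | ⟨hat, hat2⟩ <;>
          rcases abs_cases p with ⟨haU, haU2⟩ | ⟨haU, _⟩ <;>
          rw [hat, haU] <;>
        nlinarith [mul_nonneg (by linarith : (0:ℝ) ≤ s - p) (by linarith : (0:ℝ) ≤ p - t),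
          mul_nonneg hlam (by linarith : (0:ℝ) ≤ p - t)]

private lemma onedim (g lam kL kU x : ℝ) (hlam : 0 ≤ lam) (hk : kL ≤ kU)
    (hx : x ∈ Set.Icc kL kU) :
    (∀ t ∈ Set.Icc kL kU, 0 ≤ g * (t - x) + lam * (|t| - |x|)) ↔
    x = min kU (max kL (Real.sign (x - g) * max (|x - g| - lam) 0)) := by
  obtain ⟨hf1, hf2⟩ := soft_facts (x - g) lam hlam
  obtain ⟨s, hsdef⟩ : ∃ s, Real.sign (x - g) * max (|x - g| - lam) 0 = s := ⟨_, rfl⟩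
  rw [hsdef] at hf1 hf2 ⊢
  obtain ⟨p, hpdef⟩ : ∃ p, min kU (max kL s) = p := ⟨_, rfl⟩
  rw [hpdef]
  have Lp := VI_at_p (x - g) lam kL kU s p hlam hk hf1 hf2 hpdef.symm
  have hpK : p ∈ Set.Icc kL kU := by
    rw [← hpdef]
    exact ⟨le_min hk (le_max_left _ _), min_le_left _ _⟩
  constructor
  · intro hA
    have h1 := hA p hpK
    have h2 := Lp x hx
    nlinarith [h1, h2, sq_nonneg (p - x)]
  · intro hxp t ht
    have h := Lp t ht
    rw [← hxp] at h
    nlinarith [h]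

/-- For differentiable `F : ℝ^m → ℝ`, `λ ≥ 0` and the box
`K = [k_L, k_U]^m`, a point `x* ∈ K` satisfies the first-order stationarity condition
`⟪∇F(x*), y − x*⟫ + λ(‖y‖₁ − ‖x*‖₁) ≥ 0` for all `y ∈ K` if and only if
`x* = P_K(S_λ(x* − ∇F(x*)))`, where `S_λ` is the componentwise soft-thresholding
`S_λ(u)_j = sign(u_j)·max(|u_j| − λ, 0)` and `P_K` is the componentwise clamp onto
`[k_L, k_U]`. -/
theorem l1_stationarity_iff_prox_fixed_point
    (m : ℕ) (F : EuclideanSpace ℝ (Fin m) → ℝ)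
    (hF : Differentiable ℝ F)
    (lam : ℝ) (hlam : 0 ≤ lam)
    (kL kU : ℝ) (hk : kL ≤ kU)
    (K : Set (EuclideanSpace ℝ (Fin m)))
    (hK : K = {x : EuclideanSpace ℝ (Fin m) | ∀ j, x j ∈ Set.Icc kL kU})
    (xstar : EuclideanSpace ℝ (Fin m)) (hx : xstar ∈ K) :
    (∀ y ∈ K, 0 ≤ ⟪gradient F xstar, y - xstar⟫
        + lam * ((∑ j, |y j|) - ∑ j, |xstar j|)) ↔
    (∀ j, xstar j = min kU (max kL
      (Real.sign ((xstar - gradient F xstar) j)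
        * max (|(xstar - gradient F xstar) j| - lam) 0))) := by
  subst hK
  set g : EuclideanSpace ℝ (Fin m) := gradient F xstar with hg
  have hsub : ∀ j, (xstar - g) j = xstar j - g j := fun j => rfl
  have hinner : ∀ y : EuclideanSpace ℝ (Fin m),
      ⟪g, y - xstar⟫ = ∑ j, g j * (y j - xstar j) := by
    intro y
    simp [PiLp.inner_apply, PiLp.sub_apply]
    exact Finset.sum_congr rfl fun i _ => mul_comm _ _
  constructor
  · intro hA j
    rw [hsub j]
    apply (onedim (g j) lam kL kU (xstar j) hlam hk (hx j)).mp
    intro t ht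
    classical
    set y : EuclideanSpace ℝ (Fin m) := WithLp.toLp 2 (Function.update xstar j t) with hy
    have hyap : ∀ i, y i = if i = j then t else xstar i := by
      intro i
      rw [hy, WithLp.ofLp_toLp, Function.update_apply]
    have hyK : y ∈ {x : EuclideanSpace ℝ (Fin m) | ∀ i, x i ∈ Set.Icc kL kU} := by
      intro i
      rw [hyap i]
      split
      · exact ht
      · exact hx i
    have h := hA y hyK
    rw [hinner y] at h
    have e1 : ∑ i, g i * (y i - xstar i) = g j * (t - xstar j) := by
      rw [Finset.sum_eq_single j]
      · rw [hyap j, if_pos rfl]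
      · intro i _ hij
        rw [hyap i, if_neg hij]; ring
      · intro habs; exact absurd (Finset.mem_univ j) habs
    have e2 : (∑ i, |y i|) - ∑ i, |xstar i| = |t| - |xstar j| := by
      rw [← Finset.sum_sub_distrib]
      rw [Finset.sum_eq_single j]
      · rw [hyap j, if_pos rfl]
      · intro i _ hij
        rw [hyap i, if_neg hij]; ring
      · intro habs; exact absurd (Finset.mem_univ j) habs
    rw [e1, e2] at h
    exact h
  · intro hB y hy
    rw [hinner y]
    have h2 : lam * ((∑ j, |y j|) - ∑ j, |xstar j|)
        = ∑ j, lam * (|y j| - |xstar j|) := by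
      rw [← Finset.sum_sub_distrib, Finset.mul_sum]
    rw [h2, ← Finset.sum_add_distrib]
    apply Finset.sum_nonneg
    intro j _
    have hBj := hB j
    rw [hsub j] at hBj
    exact (onedim (g j) lam kL kU (xstar j) hlam hk (hx j)).mpr hBj (y j) (hy j)
end
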